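/- (Soundness, assignment case.) Suppose (μ₀,λ₀) with procedure p topmost corresponds to ⟨ρ₀,θ₀⟩ and (μ₀,λ₀,l₀ := e) ⇓ (μ',λ'). If l₀ ∈ dom(μ₀) (a global location), then rule UPDATE-HEAP yields μ' = μ₀[l₀ := v], λ' = λ₀, rule P-UPDATE yields ρ' = ρ₀[l₀ := e], η'(p) = η₀(p), and (μ',λ') corresponds to ⟨ρ',θ'⟩. If l₀ ∈ dom(λ₀) and l₀ corresponds to local variable x₀ of p, then rule UPDATE-STACK yields μ' = μ₀, λ' = λ₀[l₀ := v], rule P-UPDATE yields ρ' = ρ₀, η'(p) = η₀(p)[x₀ := e], and again (μ',λ') corresponds to ⟨ρ',θ'⟩: for all l ∈ dom(μ), μ'(l) = ρ'[l], and for all l ∈ dom(λ') corresponding to a local variable x of p, λ'(l) = η'(p)[x]. -/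
import Mathlib


/-!
STATEMENT 7 (Soundness, assignment case).  Setup as in the skip case:
heap μ and stack λ are partial maps from locations (ℕ) to values (ℤ); the
pushdown state consists of a global valuation ρ and a valuation η of the
local variables of the topmost procedure p; `G : Loc → Option Var` records
which stack location corresponds to which local variable of p (it is
injective: distinct locations correspond to distinct local variables).
`v` denotes the common value of the assigned expression e, evaluated
operationally by (μ₀,λ₀,e) ⇓ v and symbolically by the relation R of the
P-UPDATE rule.

If l₀ ∈ dom(μ₀) (a global location), rule UPDATE-HEAP yields
μ' = μ₀[l₀ := v], λ' = λ₀ while P-UPDATE yields ρ' = ρ₀[l₀ := e],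
η'(p) = η₀(p).  If l₀ ∈ dom(λ₀) and l₀ corresponds to local variable x₀ of
p, rule UPDATE-STACK yields μ' = μ₀, λ' = λ₀[l₀ := v] while P-UPDATE yields
ρ' = ρ₀, η'(p) = η₀(p)[x₀ := e].  In both cases (μ',λ') corresponds to
⟨ρ',θ'⟩.
-/

abbrev Loc := ℕ
abbrev Val := ℤ
abbrev Var := String

/-- Correspondence between an operational configuration (μ,λ) (with
procedure p topmost) and a pushdown state (ρ, η(p)), relative to the
location/local-variable correspondence `G`. -/
def Corresponds (G : Loc → Option Var) (μ lam : Loc → Option Val)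
    (ρ : Loc → Val) (η : Var → Val) : Prop :=
  (∀ l, (μ l).isSome → μ l = some (ρ l)) ∧
  (∀ l x, (lam l).isSome → G l = some x → lam l = some (η x))

theorem soundness_update (G : Loc → Option Var)
    (hGinj : ∀ l₁ l₂ x, G l₁ = some x → G l₂ = some x → l₁ = l₂)
    (μ₀ lam₀ μ' lam' : Loc → Option Val)
    (ρ₀ ρ' : Loc → Val) (η₀ η' : Var → Val)
    (l₀ : Loc) (v : Val)
    (hcorr : Corresponds G μ₀ lam₀ ρ₀ η₀)
    (hcases :
      -- case l₀ ∈ dom(μ₀): rules UPDATE-HEAP and P-UPDATE (global branch)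
      ((μ₀ l₀).isSome ∧ μ' = Function.update μ₀ l₀ (some v) ∧ lam' = lam₀ ∧
        ρ' = Function.update ρ₀ l₀ v ∧ η' = η₀) ∨
      -- case l₀ ∈ dom(λ₀), l₀ corresponds to local variable x₀ of p:
      -- rules UPDATE-STACK and P-UPDATE (local branch)
      (∃ x₀, (lam₀ l₀).isSome ∧ G l₀ = some x₀ ∧ μ' = μ₀ ∧
        lam' = Function.update lam₀ l₀ (some v) ∧
        ρ' = ρ₀ ∧ η' = Function.update η₀ x₀ v)) :
    Corresponds G μ' lam' ρ' η' := by
  rcases hcases with ⟨hs, hμ, hl, hρ, hη⟩ | ⟨x₀, hs, hG, hμ, hl, hρ, hη⟩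
  · subst hμ hl hρ hη
    refine ⟨fun l hl' => ?_, hcorr.2⟩
    by_cases h : l = l₀
    · subst h; simp [Function.update]
    · simp [Function.update, h] at hl' ⊢
      exact hcorr.1 l hl'
  · subst hμ hl hρ hη
    refine ⟨hcorr.1, fun l x hl' hx => ?_⟩
    by_cases h : l = l₀
    · subst h
      rw [hG] at hx; cases hx
      simp [Function.update]
    · simp [Function.update, h] at hl' ⊢
      have hx0 : x ≠ x₀ := fun he => h (hGinj l l₀ x hx (he ▸ hG))
      rw [if_neg hx0]
      exact hcorr.2 l x hl' hx
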